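/- Let (S,K,I) be a split graph and let u,v be distinct vertices of I. If deg_S(u) = deg_S(v), then σ_{uv}(S) is a perfect square. -/

import Mathlib

open SimpleGraph

/-- `T` is a 4-element vertex subset of `S` whose induced subgraph is a path on 4 vertices. -/
def IsInducedP4 {V : Type*} (S : SimpleGraph V) (T : Finset V) : Prop :=
  T.card = 4 ∧ Nonempty (S.induce (T : Set V) ≃g pathGraph 4)

/-- `σ_{uv}(S)`: the number of induced `P4`'s of `S` containing both `u` and `v`. -/
noncomputable def sigmaP4 {V : Type*} (S : SimpleGraph V) (u v : V) : ℕ :=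
  Nat.card {T : Finset V // IsInducedP4 S T ∧ u ∈ T ∧ v ∈ T}

lemma isInducedP4_of_path {V : Type*} [DecidableEq V] (S : SimpleGraph V)
    {a b c d : V} (hab : S.Adj a b) (hbc : S.Adj b c) (hcd : S.Adj c d)
    (hac : ¬S.Adj a c) (hbd : ¬S.Adj b d) (had : ¬S.Adj a d) :
    IsInducedP4 S ({a, b, c, d} : Finset V) := by
  have hne_ac : a ≠ c := fun h => had (h ▸ hcd)
  have hne_ad : a ≠ d := fun h => hac (h ▸ hcd.symm)
  have hne_bd : b ≠ d := fun h => had (h ▸ hab)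
  have hcard : ({a, b, c, d} : Finset V).card = 4 := by
    rw [Finset.card_insert_of_notMem (by simp [hab.ne, hne_ac, hne_ad]),
      Finset.card_insert_of_notMem (by simp [hbc.ne, hne_bd]),
      Finset.card_insert_of_notMem (by simp [hcd.ne]), Finset.card_singleton]
  refine ⟨hcard, ?_⟩
  set s : Set V := (({a, b, c, d} : Finset V) : Set V) with hs
  have w : Fin 4 → V := fun i => if i = 0 then a else if i = 1 then b else if i = 2 then c else d
  have hmem : ∀ i : Fin 4,
      (if i = 0 then a else if i = 1 then b else if i = 2 then c else d) ∈ s := by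
    intro i
    fin_cases i <;> simp [hs]
  set φ : Fin 4 → s := fun i => ⟨_, hmem i⟩ with hφ
  set ψ : s → Fin 4 := fun x =>
    if (x : V) = a then 0 else if (x : V) = b then 1 else if (x : V) = c then 2 else 3 with hψ
  have hleft : Function.LeftInverse ψ φ := by
    intro i
    fin_cases i <;>
      simp [hφ, hψ, hab.ne', hne_ac.symm, hne_ad.symm, hbc.ne', hne_bd.symm, hcd.ne']
  have hright : Function.RightInverse ψ φ := by
    rintro ⟨x, hx⟩
    simp only [hs, Finset.coe_insert, Finset.coe_singleton, Set.mem_insert_iff,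
      Set.mem_singleton_iff] at hx
    rcases hx with rfl | rfl | rfl | rfl <;>
      · apply Subtype.ext
        simp [hφ, hψ, hab.ne', hne_ac.symm, hne_ad.symm, hbc.ne', hne_bd.symm, hcd.ne']
  have e : pathGraph 4 ≃g S.induce s := by
    refine ⟨Equiv.mk φ ψ hleft hright, ?_⟩
    intro i j
    show S.Adj _ _ ↔ (pathGraph 4).Adj i j
    fin_cases i <;> fin_cases j <;>
      simp only [hφ] <;>
      first
        | exact iff_of_false S.irrefl (by rw [pathGraph_adj]; decide)
        | exact iff_of_true hab (by rw [pathGraph_adj]; decide)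
        | exact iff_of_true hab.symm (by rw [pathGraph_adj]; decide)
        | exact iff_of_true hbc (by rw [pathGraph_adj]; decide)
        | exact iff_of_true hbc.symm (by rw [pathGraph_adj]; decide)
        | exact iff_of_true hcd (by rw [pathGraph_adj]; decide)
        | exact iff_of_true hcd.symm (by rw [pathGraph_adj]; decide)
        | exact iff_of_false hac (by rw [pathGraph_adj]; decide)
        | exact iff_of_false (fun h => hac h.symm) (by rw [pathGraph_adj]; decide)
        | exact iff_of_false hbd (by rw [pathGraph_adj]; decide)
        | exact iff_of_false (fun h => hbd h.symm) (by rw [pathGraph_adj]; decide)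
        | exact iff_of_false had (by rw [pathGraph_adj]; decide)
        | exact iff_of_false (fun h => had h.symm) (by rw [pathGraph_adj]; decide)
  exact ⟨e.symm⟩

lemma extract_pair {V : Type*} [DecidableEq V] (S : SimpleGraph V) (K : Finset V)
    (hK : S.IsClique (K : Set V)) (u v : V) (huv : u ≠ v) (hnadj : ¬S.Adj u v)
    (hu : ∀ x, S.Adj u x → x ∈ K) (hv : ∀ x, S.Adj v x → x ∈ K)
    (T : Finset V) (hT : IsInducedP4 S T) (huT : u ∈ T) (hvT : v ∈ T) :
    ∃ a b, S.Adj u a ∧ S.Adj a b ∧ S.Adj b v ∧ ¬S.Adj u b ∧ ¬S.Adj a v ∧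
      T = {u, a, b, v} := by
  obtain ⟨hc, ⟨f⟩⟩ := hT
  set w : Fin 4 → V := fun i => ((f.symm i : (T : Set V)) : V) with hw
  have hinj : Function.Injective w := by
    intro i j h
    exact f.symm.injective (Subtype.val_injective h)
  have hAdj : ∀ i j, S.Adj (w i) (w j) ↔ (pathGraph 4).Adj i j := by
    intro i j
    exact f.symm.map_rel_iff
  have hmemT : ∀ i, w i ∈ T := fun i => (f.symm i).2
  have hTeq : T = Finset.univ.image w := by
    refine (Finset.eq_of_subset_of_card_le ?_ ?_).symm
    · intro x hx
      simp only [Finset.mem_image] at hx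
      obtain ⟨i, _, rfl⟩ := hx
      exact hmemT i
    · rw [Finset.card_image_of_injective _ hinj, hc]
      simp
  have huniv : (Finset.univ : Finset (Fin 4)) = {0, 1, 2, 3} := by decide
  have hWset : T = {w 0, w 1, w 2, w 3} := by
    rw [hTeq, huniv]
    simp [Finset.image_insert]
  obtain ⟨i, hi⟩ : ∃ i, w i = u := by
    have := huT; rw [hWset] at this; simp only [Finset.mem_insert, Finset.mem_singleton] at this
    rcases this with h | h | h | h
    exacts [⟨0, h.symm⟩, ⟨1, h.symm⟩, ⟨2, h.symm⟩, ⟨3, h.symm⟩]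
  obtain ⟨j, hj⟩ : ∃ j, w j = v := by
    have := hvT; rw [hWset] at this; simp only [Finset.mem_insert, Finset.mem_singleton] at this
    rcases this with h | h | h | h
    exacts [⟨0, h.symm⟩, ⟨1, h.symm⟩, ⟨2, h.symm⟩, ⟨3, h.symm⟩]
  have hij : i ≠ j := fun h => huv (hi ▸ h ▸ hj)
  have hnp : ¬(pathGraph 4).Adj i j := fun h => hnadj (hi ▸ hj ▸ (hAdj i j).mpr h)
  -- helper to kill "distance 2" cases: the two middle-attached vertices are both in K
  -- but nonadjacent, contradicting the clique.
  have hclique : ∀ x y, x ∈ K → y ∈ K → x ≠ y → S.Adj x y := by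
    intro x y hx hy hxy
    exact hK (by exact_mod_cast hx) (by exact_mod_cast hy) hxy
  have hnp' : ¬((i : ℕ) + 1 = (j : ℕ) ∨ (j : ℕ) + 1 = (i : ℕ)) := by
    rw [← pathGraph_adj]; exact hnp
  have hvij : (i : ℕ) ≠ (j : ℕ) := fun h => hij (Fin.ext h)
  have h4i : (i : ℕ) < 4 := i.isLt
  have h4j : (j : ℕ) < 4 := j.isLt
  have hmid : ∀ i' j' : Fin 4, S.Adj u (w i') → S.Adj v (w j') → i' ≠ j' →
      ¬(pathGraph 4).Adj i' j' → False := by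
    intro i' j' h1 h2 hne hnadj'
    have hnw : w i' ≠ w j' := fun h => hne (hinj h)
    exact hnadj' ((hAdj i' j').mp (hclique _ _ (hu _ h1) (hv _ h2) hnw))
  have hcases : ((i : ℕ) = 0 ∧ (j : ℕ) = 2) ∨ ((i : ℕ) = 0 ∧ (j : ℕ) = 3) ∨
      ((i : ℕ) = 1 ∧ (j : ℕ) = 3) ∨ ((i : ℕ) = 2 ∧ (j : ℕ) = 0) ∨
      ((i : ℕ) = 3 ∧ (j : ℕ) = 0) ∨ ((i : ℕ) = 3 ∧ (j : ℕ) = 1) := by omega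
  rcases hcases with ⟨h1, h2⟩ | ⟨h1, h2⟩ | ⟨h1, h2⟩ | ⟨h1, h2⟩ | ⟨h1, h2⟩ | ⟨h1, h2⟩ <;>
      [(obtain rfl : i = 0 := Fin.ext (by simpa using h1);
        obtain rfl : j = 2 := Fin.ext (by simpa using h2));
       (obtain rfl : i = 0 := Fin.ext (by simpa using h1);
        obtain rfl : j = 3 := Fin.ext (by simpa using h2));
       (obtain rfl : i = 1 := Fin.ext (by simpa using h1);
        obtain rfl : j = 3 := Fin.ext (by simpa using h2));
       (obtain rfl : i = 2 := Fin.ext (by simpa using h1);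
        obtain rfl : j = 0 := Fin.ext (by simpa using h2));
       (obtain rfl : i = 3 := Fin.ext (by simpa using h1);
        obtain rfl : j = 0 := Fin.ext (by simpa using h2));
       (obtain rfl : i = 3 := Fin.ext (by simpa using h1);
        obtain rfl : j = 1 := Fin.ext (by simpa using h2))]
  · -- i = 0, j = 2
    exact absurd (hmid 1 3 (hi ▸ (hAdj 0 1).mpr (by rw [pathGraph_adj]; decide))
      (hj ▸ (hAdj 2 3).mpr (by rw [pathGraph_adj]; decide)) (by decide)
      (by rw [pathGraph_adj]; decide)) id
  · -- i = 0, j = 3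
    refine ⟨w 1, w 2, hi ▸ (hAdj 0 1).mpr (by rw [pathGraph_adj]; decide),
      (hAdj 1 2).mpr (by rw [pathGraph_adj]; decide),
      hj ▸ ((hAdj 2 3).mpr (by rw [pathGraph_adj]; decide)),
      hi ▸ fun h => absurd ((hAdj 0 2).mp h) (by rw [pathGraph_adj]; decide),
      hj ▸ fun h => absurd ((hAdj 1 3).mp h) (by rw [pathGraph_adj]; decide), ?_⟩
    rw [hWset, ← hi, ← hj]
  · -- i = 1, j = 3
    exact absurd (hmid 0 2 (hi ▸ (hAdj 1 0).mpr (by rw [pathGraph_adj]; decide))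
      (hj ▸ (hAdj 3 2).mpr (by rw [pathGraph_adj]; decide)) (by decide)
      (by rw [pathGraph_adj]; decide)) id
  · -- i = 2, j = 0
    exact absurd (hmid 3 1 (hi ▸ (hAdj 2 3).mpr (by rw [pathGraph_adj]; decide))
      (hj ▸ (hAdj 0 1).mpr (by rw [pathGraph_adj]; decide)) (by decide)
      (by rw [pathGraph_adj]; decide)) id
  · -- i = 3, j = 0
    refine ⟨w 2, w 1, hi ▸ (hAdj 3 2).mpr (by rw [pathGraph_adj]; decide),
      (hAdj 2 1).mpr (by rw [pathGraph_adj]; decide),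
      hj ▸ ((hAdj 1 0).mpr (by rw [pathGraph_adj]; decide)),
      hi ▸ fun h => absurd ((hAdj 3 1).mp h) (by rw [pathGraph_adj]; decide),
      hj ▸ fun h => absurd ((hAdj 2 0).mp h) (by rw [pathGraph_adj]; decide), ?_⟩
    rw [hWset, ← hi, ← hj]
    ext x
    simp only [Finset.mem_insert, Finset.mem_singleton]
    tauto
  · -- i = 3, j = 1
    exact absurd (hmid 2 0 (hi ▸ (hAdj 3 2).mpr (by rw [pathGraph_adj]; decide))
      (hj ▸ (hAdj 1 0).mpr (by rw [pathGraph_adj]; decide)) (by decide)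
      (by rw [pathGraph_adj]; decide)) id

theorem stmt6 {V : Type*} [Fintype V] [DecidableEq V] [Nonempty V]
    (S : SimpleGraph V) [DecidableRel S.Adj] (K I : Finset V)
    (hpart : K ∪ I = Finset.univ) (hdisj : Disjoint K I)
    (hK : S.IsClique (K : Set V)) (hI : Sᶜ.IsClique (I : Set V))
    (u v : V) (hu : u ∈ I) (hv : v ∈ I) (huv : u ≠ v)
    (hdeg : S.degree u = S.degree v) :
    ∃ k : ℕ, sigmaP4 S u v = k ^ 2 := by
  classical
  have hInd : ∀ x y, x ∈ I → y ∈ I → ¬S.Adj x y := by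
    intro x y hx hy h
    by_cases hxy : x = y
    · exact S.irrefl (hxy ▸ h)
    · exact (hI (by exact_mod_cast hx) (by exact_mod_cast hy) hxy).2 h
  have hnadj : ¬S.Adj u v := hInd u v hu hv
  have hNbrK : ∀ y x, y ∈ I → S.Adj y x → x ∈ K := by
    intro y x hy h
    have hxu : x ∈ K ∪ I := hpart ▸ Finset.mem_univ x
    rcases Finset.mem_union.mp hxu with hk | hi
    · exact hk
    · exact absurd h (hInd y x hy hi)
  set A : Finset V := S.neighborFinset u \ S.neighborFinset v with hA
  set B : Finset V := S.neighborFinset v \ S.neighborFinset u with hB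
  have hcards : A.card = B.card := by
    have h1 := Finset.card_sdiff_add_card_inter (S.neighborFinset u) (S.neighborFinset v)
    have h2 := Finset.card_sdiff_add_card_inter (S.neighborFinset v) (S.neighborFinset u)
    rw [Finset.inter_comm] at h2
    have hd1 : (S.neighborFinset u).card = S.degree u := rfl
    have hd2 : (S.neighborFinset v).card = S.degree v := rfl
    simp only [hA, hB]
    omega
  have key : sigmaP4 S u v = A.card * B.card := by
    have hGood : ∀ p : V × V, p ∈ A ×ˢ B →
        IsInducedP4 S {u, p.1, p.2, v} ∧ u ∈ ({u, p.1, p.2, v} : Finset V) ∧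
          v ∈ ({u, p.1, p.2, v} : Finset V) := by
      rintro ⟨a, b⟩ hab
      rw [Finset.mem_product] at hab
      obtain ⟨ha, hb⟩ := hab
      rw [hA, Finset.mem_sdiff, mem_neighborFinset] at ha
      rw [hB, Finset.mem_sdiff, mem_neighborFinset] at hb
      obtain ⟨hua, hva⟩ := ha
      obtain ⟨hvb, hub⟩ := hb
      rw [mem_neighborFinset] at hva hub
      have haK : a ∈ K := hNbrK u a hu hua
      have hbK : b ∈ K := hNbrK v b hv hvb
      have hne : a ≠ b := fun h => hva (h ▸ hvb)
      have hadjab : S.Adj a b := hK (by exact_mod_cast haK) (by exact_mod_cast hbK) hne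
      exact ⟨isInducedP4_of_path S hua hadjab hvb.symm hub
        (fun h => hva h.symm) hnadj, by simp, by simp⟩
    let F : ↥(A ×ˢ B) → {T : Finset V // IsInducedP4 S T ∧ u ∈ T ∧ v ∈ T} :=
      fun p => ⟨{u, p.1.1, p.1.2, v}, hGood p.1 p.2⟩
    have hFbij : Function.Bijective F := by
      constructor
      · rintro ⟨⟨a, b⟩, hab⟩ ⟨⟨a', b'⟩, hab'⟩ h
        have hT : ({u, a, b, v} : Finset V) = {u, a', b', v} := by
          have := congrArg Subtype.val h
          simpa [F] using this
        have hab2 := hab; have hab2' := hab'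
        rw [Finset.mem_product, hA, hB, Finset.mem_sdiff, Finset.mem_sdiff,
          mem_neighborFinset, mem_neighborFinset, mem_neighborFinset,
          mem_neighborFinset] at hab2 hab2'
        obtain ⟨⟨hua, hva⟩, hvb, hub⟩ := hab2
        obtain ⟨⟨hua', hva'⟩, hvb', hub'⟩ := hab2'
        have haa : a = a' := by
          have : a ∈ ({u, a', b', v} : Finset V) := hT ▸ (by simp)
          simp only [Finset.mem_insert, Finset.mem_singleton] at this
          rcases this with h | h | h | h
          · exact absurd (h ▸ hua) (S.irrefl)
          · exact h
          · exact absurd (h ▸ hua) hub'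
          · exact absurd (h ▸ hua) hnadj
        have hbb : b = b' := by
          have : b ∈ ({u, a', b', v} : Finset V) := hT ▸ (by simp)
          simp only [Finset.mem_insert, Finset.mem_singleton] at this
          rcases this with h | h | h | h
          · exact absurd (h ▸ hvb) (fun hh => hnadj hh.symm)
          · exact absurd (h ▸ hvb) hva'
          · exact h
          · exact absurd (h ▸ hvb) (S.irrefl)
        apply Subtype.ext
        exact Prod.ext haa hbb
      · rintro ⟨T, hT, huT, hvT⟩
        obtain ⟨a, b, hua, hadjab, hbv, hub, hav, hTeq⟩ :=
          extract_pair S K hK u v huv hnadj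
            (fun x => hNbrK u x hu) (fun x => hNbrK v x hv) T hT huT hvT
        have hmem : (a, b) ∈ A ×ˢ B := by
          rw [Finset.mem_product, hA, hB, Finset.mem_sdiff, Finset.mem_sdiff,
            mem_neighborFinset, mem_neighborFinset, mem_neighborFinset, mem_neighborFinset]
          exact ⟨⟨hua, fun h => hav h.symm⟩, hbv.symm, hub⟩
        exact ⟨⟨(a, b), hmem⟩, Subtype.ext hTeq.symm⟩
    rw [sigmaP4, Nat.card_congr (Equiv.ofBijective F hFbij).symm,
      Nat.card_eq_finsetCard, Finset.card_product]
  exact ⟨A.card, by rw [key, ← hcards]; ring⟩
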